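/- Let f : {0,1}^n → {0,1}^n be the global transition map of a Boolean network whose dependency digraph is acyclic (node i's update reads only its in-neighbors, and there is no directed cycle among nodes). Then f has a unique fixed point, and every trajectory reaches it in at most l steps, where l is the length of the longest directed path in the dependency digraph. -/

import Mathlib

private lemma stmt19_key {V : Type*} (E : V → V → Prop) (f : (V → Bool) → (V → Bool))
    (hdep : ∀ i : V, ∀ s s' : V → Bool, (∀ j, E j i → s j = s' j) → f s i = f s' i) :
    ∀ t : ℕ, ∀ v : V, (∀ p : List V, (p ++ [v]).Chain' E → (p ++ [v]).length ≤ t) →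
      ∀ y z : V → Bool, f^[t] y v = f^[t] z v := by
  intro t
  induction t with
  | zero =>
    intro v hv y z
    have := hv [] (List.isChain_singleton v)
    simp at this
  | succ t ih =>
    intro v hv y z
    rw [Function.iterate_succ_apply', Function.iterate_succ_apply']
    apply hdep
    intro j hj
    apply ih
    intro p hp
    have h2 : ((p ++ [j]) ++ [v]).Chain' E := by
      show (p ++ [j] ++ [v]).IsChain E
      rw [List.isChain_append]
      refine ⟨hp, List.isChain_singleton v, ?_⟩
      intro a ha b hb
      simp at ha hb
      subst ha; subst hb
      exact hj
    have := hv (p ++ [j]) h2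
    simp at this ⊢
    omega

/-- Robert's theorem: if the global transition map `f` of a Boolean network has an
acyclic dependency digraph `E` (node `i`'s update reads only its in-neighbors, and
there is no directed cycle), then `f` has a unique fixed point, and every trajectory
reaches it in at most `l` steps, where every directed path of the dependency digraph
has at most `l` vertices. -/
theorem stmt19 {V : Type*} [Fintype V] [DecidableEq V]
    (E : V → V → Prop) (f : (V → Bool) → (V → Bool))
    (hdep : ∀ i : V, ∀ s s' : V → Bool, (∀ j, E j i → s j = s' j) → f s i = f s' i)
    (hacyclic : ∀ v, ¬ Relation.TransGen E v v)
    (l : ℕ) (hl : ∀ p : List V, p.Chain' E → p.length ≤ l) :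
    ∃ x : V → Bool, f x = x ∧ (∀ y, f y = y → y = x) ∧ ∀ y, f^[l] y = x := by
  have key : ∀ y z : V → Bool, f^[l] y = f^[l] z := by
    intro y z
    funext v
    exact stmt19_key E f hdep l v (fun p hp => hl _ hp) y z
  set x := f^[l] (fun _ => false) with hx
  refine ⟨x, ?_, ?_, fun y => key y _⟩
  · calc f x = f^[l] (f (fun _ => false)) := by
          rw [hx, ← Function.iterate_succ_apply' f l, Function.iterate_succ_apply]
       _ = x := key _ _
  · intro y hy
    have : f^[l] y = y := Function.iterate_fixed hy l
    rw [← this]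
    exact key y _
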